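/- Let θ, ψ ∈ (0, π) ∪ (π, 2π) be angles with e^{iθ} ≠ ±1 and e^{iψ} ≠ ±1. Then there exists t ∈ C* with arg(t) ≡ θ and arg(1+t) ≡ ψ (mod 2π) if and only if (θ, ψ) lies in one of the two open triangles {0 < ψ < θ < π} ∪ {π < θ < ψ < 2π} (taking representatives in (0, 2π)); moreover, when it exists, such t is unique with r = |t| determined by r = sin(ψ)/sin(θ − ψ). -/

import Mathlib

open Complex

lemma exp_eq_of_angle_eq {a b : ℝ} (h : (a : Real.Angle) = b) :
    Complex.exp (a * I) = Complex.exp (b * I) := by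
  have hc := congrArg Real.Angle.cos h
  have hs := congrArg Real.Angle.sin h
  rw [Real.Angle.cos_coe, Real.Angle.cos_coe] at hc
  rw [Real.Angle.sin_coe, Real.Angle.sin_coe] at hs
  rw [Complex.exp_mul_I, Complex.exp_mul_I, ← Complex.ofReal_cos, ← Complex.ofReal_cos,
    ← Complex.ofReal_sin, ← Complex.ofReal_sin, hc, hs]

lemma arg_angle_smul_exp {c θ : ℝ} (hc : 0 < c) :
    (Complex.arg ((c : ℂ) * Complex.exp (θ * I)) : Real.Angle) = θ := by
  rw [Complex.arg_real_mul _ hc, Complex.exp_mul_I, ← Complex.ofReal_cos, ← Complex.ofReal_sin]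
  have := Complex.arg_cos_add_sin_mul_I_coe_angle (θ : Real.Angle)
  rwa [Real.Angle.cos_coe, Real.Angle.sin_coe] at this

lemma decompose_t {θ ψ : ℝ} (hθs : Real.sin θ ≠ 0) {t : ℂ}
    (h1 : t ≠ 0) (h2 : (Complex.arg t : Real.Angle) = θ)
    (h3 : (Complex.arg (1 + t) : Real.Angle) = ψ) :
    ‖t‖ * Real.sin (θ - ψ) = Real.sin ψ ∧ ‖1 + t‖ * Real.sin (θ - ψ) = Real.sin θ ∧
    t = (‖t‖ : ℂ) * Complex.exp (θ * I) := by
  have ht : t = (‖t‖ : ℂ) * Complex.exp (θ * I) := by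
    rw [← exp_eq_of_angle_eq h2, Complex.norm_mul_exp_arg_mul_I]
  have hrpos : (0:ℝ) < ‖t‖ := norm_pos_iff.mpr h1
  have him : t.im = ‖t‖ * Real.sin θ := by
    rw [ht]; simp [Complex.exp_mul_I, Complex.sin_ofReal_re]
  have h1t : 1 + t ≠ 0 := by
    intro h
    have : (1 + t).im = 0 := by rw [h]; simp
    simp only [Complex.add_im, Complex.one_im, zero_add, him] at this
    rcases mul_eq_zero.mp this with h' | h'
    · exact hrpos.ne' h'
    · exact hθs h'
  have hst : 1 + t = (‖1 + t‖ : ℂ) * Complex.exp (ψ * I) := by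
    rw [← exp_eq_of_angle_eq h3, Complex.norm_mul_exp_arg_mul_I]
  have hre : 1 + ‖t‖ * Real.cos θ = ‖1 + t‖ * Real.cos ψ := by
    have := congrArg Complex.re hst
    rw [ht] at this ⊢
    simpa [Complex.exp_mul_I, Complex.cos_ofReal_re] using this
  have him2 : ‖t‖ * Real.sin θ = ‖1 + t‖ * Real.sin ψ := by
    have := congrArg Complex.im hst
    simpa [Complex.exp_mul_I, him, Complex.sin_ofReal_re] using this
  refine ⟨?_, ?_, ht⟩
  · rw [Real.sin_sub]; linear_combination Real.cos ψ * him2 - Real.sin ψ * hre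
  · rw [Real.sin_sub]; linear_combination Real.cos θ * him2 - Real.sin θ * hre

set_option maxHeartbeats 1000000 in
/-- Description of the coamoeba of the line {(t, 1+t)} ⊂ (ℂ*)²: for angles
θ, ψ ∈ (0,π) ∪ (π,2π), there is t ∈ ℂ* with arg t ≡ θ and arg(1+t) ≡ ψ
(mod 2π) iff (θ,ψ) lies in one of two open triangles; such a t is unique,
with |t| = sin ψ / sin(θ − ψ). -/
theorem coamoeba_of_line_triangles (θ ψ : ℝ)
    (hθ : (0 < θ ∧ θ < Real.pi) ∨ (Real.pi < θ ∧ θ < 2 * Real.pi))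
    (hψ : (0 < ψ ∧ ψ < Real.pi) ∨ (Real.pi < ψ ∧ ψ < 2 * Real.pi)) :
    ((∃ t : ℂ, t ≠ 0 ∧ (Complex.arg t : Real.Angle) = (θ : Real.Angle) ∧
        (Complex.arg (1 + t) : Real.Angle) = (ψ : Real.Angle)) ↔
      ((0 < ψ ∧ ψ < θ ∧ θ < Real.pi) ∨
       (Real.pi < θ ∧ θ < ψ ∧ ψ < 2 * Real.pi))) ∧
    (∀ t₁ t₂ : ℂ,
      (t₁ ≠ 0 ∧ (Complex.arg t₁ : Real.Angle) = (θ : Real.Angle) ∧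
        (Complex.arg (1 + t₁) : Real.Angle) = (ψ : Real.Angle)) →
      (t₂ ≠ 0 ∧ (Complex.arg t₂ : Real.Angle) = (θ : Real.Angle) ∧
        (Complex.arg (1 + t₂) : Real.Angle) = (ψ : Real.Angle)) →
      t₁ = t₂) ∧
    (∀ t : ℂ,
      (t ≠ 0 ∧ (Complex.arg t : Real.Angle) = (θ : Real.Angle) ∧
        (Complex.arg (1 + t) : Real.Angle) = (ψ : Real.Angle)) →
      ‖t‖ = Real.sin ψ / Real.sin (θ - ψ)) := by
  have hπ := Real.pi_pos
  have hθ' : (0 < Real.sin θ ∧ 0 < θ ∧ θ < Real.pi) ∨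
      (Real.sin θ < 0 ∧ Real.pi < θ ∧ θ < 2 * Real.pi) := by
    rcases hθ with ⟨h1, h2⟩ | ⟨h1, h2⟩
    · exact Or.inl ⟨Real.sin_pos_of_pos_of_lt_pi h1 h2, h1, h2⟩
    · refine Or.inr ⟨?_, h1, h2⟩
      have : 0 < Real.sin (θ - Real.pi) :=
        Real.sin_pos_of_pos_of_lt_pi (by linarith) (by linarith)
      rw [Real.sin_sub_pi] at this; linarith
  have hψ' : (0 < Real.sin ψ ∧ 0 < ψ ∧ ψ < Real.pi) ∨
      (Real.sin ψ < 0 ∧ Real.pi < ψ ∧ ψ < 2 * Real.pi) := by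
    rcases hψ with ⟨h1, h2⟩ | ⟨h1, h2⟩
    · exact Or.inl ⟨Real.sin_pos_of_pos_of_lt_pi h1 h2, h1, h2⟩
    · refine Or.inr ⟨?_, h1, h2⟩
      have : 0 < Real.sin (ψ - Real.pi) :=
        Real.sin_pos_of_pos_of_lt_pi (by linarith) (by linarith)
      rw [Real.sin_sub_pi] at this; linarith
  have hθs : Real.sin θ ≠ 0 := by rcases hθ' with ⟨h, _⟩ | ⟨h, _⟩ <;> [exact h.ne'; exact h.ne]
  have hψs : Real.sin ψ ≠ 0 := by rcases hψ' with ⟨h, _⟩ | ⟨h, _⟩ <;> [exact h.ne'; exact h.ne]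
  refine ⟨⟨?_, ?_⟩, ?_, ?_⟩
  · -- forward direction of iff
    rintro ⟨t, h1, h2, h3⟩
    obtain ⟨hA, hB, -⟩ := decompose_t hθs h1 h2 h3
    have hrpos : (0:ℝ) < ‖t‖ := norm_pos_iff.mpr h1
    have hspos : (0:ℝ) < ‖1 + t‖ := by
      rcases eq_or_ne (1 + t) 0 with h | h
      · exfalso; rw [h] at hB; simp at hB; exact hθs hB.symm
      · exact norm_pos_iff.mpr h
    rcases hθ' with ⟨hsθ, hθ1, hθ2⟩ | ⟨hsθ, hθ1, hθ2⟩ <;>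
      rcases hψ' with ⟨hsψ, hψ1, hψ2⟩ | ⟨hsψ, hψ1, hψ2⟩
    · -- both in (0, π)
      have hD : 0 < Real.sin (θ - ψ) := by
        rcases lt_or_ge 0 (Real.sin (θ - ψ)) with h | h
        · exact h
        · have : ‖1 + t‖ * Real.sin (θ - ψ) ≤ 0 := mul_nonpos_of_nonneg_of_nonpos hspos.le h
          linarith
      have hψθ : ψ < θ := by
        by_contra h
        push_neg at h
        have := Real.sin_nonpos_of_nonpos_of_neg_pi_le (x := θ - ψ)
          (by linarith) (by linarith)
        linarith
      exact Or.inl ⟨hψ1, hψθ, hθ2⟩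
    · exfalso
      have hcross : ‖1 + t‖ * Real.sin ψ = ‖t‖ * Real.sin θ := by
        linear_combination ‖t‖ * hB - ‖1 + t‖ * hA
      have h1 : 0 < ‖t‖ * Real.sin θ := mul_pos hrpos hsθ
      have h2 : ‖1 + t‖ * Real.sin ψ < 0 := mul_neg_of_pos_of_neg hspos hsψ
      linarith
    · exfalso
      have hcross : ‖1 + t‖ * Real.sin ψ = ‖t‖ * Real.sin θ := by
        linear_combination ‖t‖ * hB - ‖1 + t‖ * hA
      have h1 : ‖t‖ * Real.sin θ < 0 := mul_neg_of_pos_of_neg hrpos hsθ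
      have h2 : 0 < ‖1 + t‖ * Real.sin ψ := mul_pos hspos hsψ
      linarith
    · -- both in (π, 2π)
      have hD : Real.sin (θ - ψ) < 0 := by
        rcases lt_or_ge (Real.sin (θ - ψ)) 0 with h | h
        · exact h
        · have : 0 ≤ ‖1 + t‖ * Real.sin (θ - ψ) := mul_nonneg hspos.le h
          linarith
      have hψθ : θ < ψ := by
        by_contra h
        push_neg at h
        have := Real.sin_nonneg_of_nonneg_of_le_pi (x := θ - ψ)
          (by linarith) (by linarith)
        linarith
      exact Or.inr ⟨hθ1, hψθ, hψ2⟩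
  · -- reverse direction of iff
    intro h
    have key : Real.sin (θ - ψ) ≠ 0 ∧ 0 < Real.sin ψ / Real.sin (θ - ψ) ∧
        0 < Real.sin θ / Real.sin (θ - ψ) := by
      rcases h with ⟨h1, h2, h3⟩ | ⟨h1, h2, h3⟩
      · have hD : 0 < Real.sin (θ - ψ) :=
          Real.sin_pos_of_pos_of_lt_pi (by linarith) (by linarith)
        have hsθ : 0 < Real.sin θ := Real.sin_pos_of_pos_of_lt_pi (by linarith) (by linarith)
        have hsψ : 0 < Real.sin ψ := Real.sin_pos_of_pos_of_lt_pi (by linarith) (by linarith)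
        exact ⟨hD.ne', div_pos hsψ hD, div_pos hsθ hD⟩
      · have hD : Real.sin (θ - ψ) < 0 := by
          have : 0 < Real.sin (ψ - θ) :=
            Real.sin_pos_of_pos_of_lt_pi (by linarith) (by linarith)
          rw [show θ - ψ = -(ψ - θ) by ring, Real.sin_neg]; linarith
        have hsθ : Real.sin θ < 0 := by
          rcases hθ' with ⟨_, h', _⟩ | ⟨h', _, _⟩
          · linarith
          · exact h'
        have hsψ : Real.sin ψ < 0 := by
          rcases hψ' with ⟨_, h', _⟩ | ⟨h', _, _⟩
          · linarith
          · exact h'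
        exact ⟨hD.ne, div_pos_of_neg_of_neg hsψ hD, div_pos_of_neg_of_neg hsθ hD⟩
    obtain ⟨hD, hr, hs⟩ := key
    set D := Real.sin (θ - ψ) with hDdef
    refine ⟨(↑(Real.sin ψ / D)) * Complex.exp (θ * I), ?_, ?_, ?_⟩
    · apply mul_ne_zero
      · exact_mod_cast hr.ne'
      · exact Complex.exp_ne_zero _
    · exact arg_angle_smul_exp hr
    · have base : ((D : ℂ)) + (Real.sin ψ : ℂ) * Complex.exp (θ * I) =
          (Real.sin θ : ℂ) * Complex.exp (ψ * I) := by
        rw [Complex.exp_mul_I, Complex.exp_mul_I]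
        apply Complex.ext
        · simp [hDdef, Real.sin_sub]; ring
        · simp [mul_comm]
      have hD' : (D : ℂ) ≠ 0 := by exact_mod_cast hD
      have key2 : (1 : ℂ) + (↑(Real.sin ψ / D)) * Complex.exp (θ * I) =
          (↑(Real.sin θ / D)) * Complex.exp (ψ * I) := by
        rw [Complex.ofReal_div, Complex.ofReal_div]
        field_simp
        push_cast at base ⊢
        rw [mul_comm I (ψ:ℂ)]
        linear_combination base
      rw [key2]
      exact arg_angle_smul_exp hs
  · -- uniqueness
    rintro t₁ t₂ ⟨h1, h2, h3⟩ ⟨h1', h2', h3'⟩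
    obtain ⟨hA, -, ht⟩ := decompose_t hθs h1 h2 h3
    obtain ⟨hA', -, ht'⟩ := decompose_t hθs h1' h2' h3'
    have hD : Real.sin (θ - ψ) ≠ 0 := by
      intro h; rw [h, mul_zero] at hA; exact hψs hA.symm
    have : ‖t₁‖ = ‖t₂‖ := by
      have := hA.trans hA'.symm
      exact mul_right_cancel₀ hD this
    rw [ht, ht', this]
  · -- norm formula
    rintro t ⟨h1, h2, h3⟩
    obtain ⟨hA, -, -⟩ := decompose_t hθs h1 h2 h3
    have hD : Real.sin (θ - ψ) ≠ 0 := by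
      intro h; rw [h, mul_zero] at hA; exact hψs hA.symm
    field_simp
    exact hA
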